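/- Let n, m ≥ 1 be integers and let a : {1,…,n} × {1,…,m} → ℝ be nonnegative reals. Let (θ_{ik})_{1≤i≤n, 1≤k≤m} be mutually independent random variables, each uniformly distributed on [0, 2π), and define the random complex matrix H ∈ ℂ^{n×m} by H_{ik} = a_{ik} · exp(𝕚·θ_{ik}). Then 𝔼[ Tr( (Hᴴ H)² ) ] = ∑_{i=1}^n ( ∑_{k=1}^m a_{ik}² )² + ∑_{k=1}^m ( ∑_{i=1}^n a_{ik}² )² − ∑_{i=1}^n ∑_{k=1}^m a_{ik}⁴, where Hᴴ denotes the conjugate transpose of H. -/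

import Mathlib

open MeasureTheory ProbabilityTheory Matrix

noncomputable def nuU : Measure ℝ :=
  (ENNReal.ofReal (2 * Real.pi))⁻¹ • (volume.restrict (Set.Ico (0:ℝ) (2*Real.pi)))

lemma nuU_prob : IsProbabilityMeasure nuU := by
  constructor
  rw [nuU]
  simp [Measure.restrict_apply, Real.volume_Ico]
  rw [ENNReal.inv_mul_cancel]
  · simp [Real.pi_pos.le]; positivity
  · exact ENNReal.mul_ne_top (by norm_num) ENNReal.ofReal_ne_top

lemma int_exp_nuU (c : ℤ) :
    ∫ x : ℝ, Complex.exp (Complex.I * c * x) ∂nuU = if c = 0 then 1 else 0 := by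
  rw [nuU, integral_smul_measure]
  have h2pi : (0:ℝ) < 2 * Real.pi := by positivity
  have hIco : ∫ x in Set.Ico (0:ℝ) (2*Real.pi), Complex.exp (Complex.I * c * x) =
      ∫ x in (0:ℝ)..(2*Real.pi), Complex.exp (Complex.I * c * x) := by
    rw [MeasureTheory.integral_Ico_eq_integral_Ioo,
      intervalIntegral.integral_of_le h2pi.le, MeasureTheory.integral_Ioc_eq_integral_Ioo]
  rw [hIco]
  rcases eq_or_ne c 0 with rfl | hc
  · rw [if_pos rfl]
    simp only [Int.cast_zero, mul_zero, zero_mul, Complex.exp_zero]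
    rw [intervalIntegral.integral_const, ENNReal.toReal_inv, ENNReal.toReal_ofReal h2pi.le]
    simp only [sub_zero, smul_eq_mul, mul_one, Complex.real_smul, Complex.ofReal_inv,
      Complex.ofReal_mul, Complex.ofReal_ofNat]
    rw [inv_mul_cancel₀ (by simp [Real.pi_ne_zero])]
  · have hc' : Complex.I * c ≠ 0 := by
      simp [Complex.I_ne_zero, Complex.ext_iff]
      exact_mod_cast hc
    rw [if_neg hc]
    have := integral_exp_mul_complex hc' (a := 0) (b := 2*Real.pi)
    simp only [mul_assoc] at this ⊢
    rw [this]
    have : Complex.exp (Complex.I * (↑c * ↑(2 * Real.pi))) = 1 := by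
      rw [show Complex.I * (↑c * ↑(2 * Real.pi)) = (c : ℂ) * (2 * Real.pi * Complex.I) by
        push_cast; ring]
      exact Complex.exp_int_mul_two_pi_mul_I c
    rw [this]
    simp

lemma pi_prod_integral {ι : Type*} [Fintype ι] (ν : Measure ℝ) [SigmaFinite ν]
    (g : ι → ℝ → ℂ) :
    ∫ x : ι → ℝ, ∏ i, g i (x i) ∂(Measure.pi fun _ => ν) = ∏ i, ∫ x, g i x ∂ν := by
  letI : MeasureSpace ℝ := ⟨ν⟩
  haveI : SigmaFinite (volume : Measure ℝ) := ‹SigmaFinite ν›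
  exact MeasureTheory.integral_fintype_prod_eq_prod (fun i => g i)

lemma joint_law {Ω : Type*} [MeasurableSpace Ω] (μ : Measure Ω) [IsProbabilityMeasure μ]
    {ι : Type*} [Fintype ι] (θ : ι → Ω → ℝ) (hmeas : ∀ i, Measurable (θ i))
    (hindep : iIndepFun θ μ) :
    μ.map (fun ω i => θ i ω) = Measure.pi (fun i => μ.map (θ i)) := by
  haveI : ∀ i, IsProbabilityMeasure (μ.map (θ i)) :=
    fun i => Measure.isProbabilityMeasure_map (hmeas i).aemeasurable
  haveI : ∀ i, SigmaFinite (μ.map (θ i)) := fun i => inferInstance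
  refine (Measure.pi_eq fun s hs => ?_).symm
  rw [Measure.map_apply (measurable_pi_lambda _ hmeas) (MeasurableSet.univ_pi hs)]
  have hset : (fun ω i => θ i ω) ⁻¹' Set.pi Set.univ s = ⋂ i ∈ Finset.univ, θ i ⁻¹' s i := by
    ext ω; simp [Set.mem_pi]
  rw [hset, hindep.measure_inter_preimage_eq_mul Finset.univ (fun i _ => hs i)]
  exact Finset.prod_congr rfl fun i _ => (Measure.map_apply (hmeas i) (hs i)).symm

lemma exp_sum_integral {Ω : Type*} [MeasurableSpace Ω] (μ : Measure Ω) [IsProbabilityMeasure μ]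
    {ι : Type*} [Fintype ι] (θ : ι → Ω → ℝ) (hmeas : ∀ i, Measurable (θ i))
    (hindep : iIndepFun θ μ)
    (hunif : ∀ i, μ.map (θ i) = nuU) (c : ι → ℤ) :
    ∫ ω, Complex.exp (Complex.I * ∑ i, (c i : ℂ) * (θ i ω : ℂ)) ∂μ
      = if (∀ i, c i = 0) then 1 else 0 := by
  haveI := nuU_prob
  have hϑ : Measurable (fun ω i => θ i ω) := measurable_pi_lambda _ hmeas
  have hlaw : μ.map (fun ω i => θ i ω) = Measure.pi (fun _ => nuU) := by
    rw [joint_law μ θ hmeas hindep]; exact congrArg Measure.pi (funext fun i => hunif i)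
  set F : (ι → ℝ) → ℂ := fun x => ∏ i, Complex.exp (Complex.I * c i * x i) with hFdef
  have hFmeas : Measurable F := by
    apply Finset.measurable_prod
    intro i _
    fun_prop
  have hF : ∀ ω, Complex.exp (Complex.I * ∑ i, (c i : ℂ) * (θ i ω : ℂ))
      = F (fun i => θ i ω) := by
    intro ω
    simp only [hFdef, Finset.mul_sum, Complex.exp_sum, mul_assoc]
  calc ∫ ω, Complex.exp (Complex.I * ∑ i, (c i : ℂ) * (θ i ω : ℂ)) ∂μ
      = ∫ ω, F (fun i => θ i ω) ∂μ := by simp_rw [hF]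
    _ = ∫ x, F x ∂(μ.map (fun ω i => θ i ω)) :=
        (integral_map hϑ.aemeasurable hFmeas.aestronglyMeasurable).symm
    _ = ∫ x : ι → ℝ, ∏ i, Complex.exp (Complex.I * c i * x i) ∂(Measure.pi fun _ => nuU) := by
        rw [hlaw]
    _ = ∏ i, ∫ x : ℝ, Complex.exp (Complex.I * c i * x) ∂nuU :=
        pi_prod_integral (ι := ι) nuU (fun i x => Complex.exp (Complex.I * c i * x))
    _ = ∏ i, if c i = 0 then (1:ℂ) else 0 := by
        exact Finset.prod_congr rfl fun i _ => int_exp_nuU (c i)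
    _ = if (∀ i, c i = 0) then 1 else 0 := by
        rw [Finset.prod_boole]; simp

theorem stmt_13 (n m : ℕ) (hn : 1 ≤ n) (hm : 1 ≤ m)
    (a : Fin n → Fin m → ℝ) (ha : ∀ i k, 0 ≤ a i k)
    (Ω : Type*) [MeasurableSpace Ω] (μ : Measure Ω) [IsProbabilityMeasure μ]
    (θ : Fin n × Fin m → Ω → ℝ)
    (hmeas : ∀ ik, Measurable (θ ik))
    (hindep : iIndepFun θ μ)
    (hunif : ∀ ik, Measure.map (θ ik) μ =
      (ENNReal.ofReal (2 * Real.pi))⁻¹ •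
        (volume.restrict (Set.Ico (0 : ℝ) (2 * Real.pi))))
    (H : Ω → Matrix (Fin n) (Fin m) ℂ)
    (hH : ∀ ω i k, H ω i k = (a i k : ℂ) * Complex.exp (Complex.I * (θ (i, k) ω : ℂ))) :
    (∫ ω, Matrix.trace (((H ω)ᴴ * H ω) ^ 2) ∂μ) =
      ((∑ i, (∑ k, a i k ^ 2) ^ 2 + ∑ k, (∑ i, a i k ^ 2) ^ 2
          - ∑ i, ∑ k, a i k ^ 4 : ℝ) : ℂ) := by
  classical
  -- exponent coefficient function
  set cc : Fin n → Fin n → Fin m → Fin m → (Fin n × Fin m) → ℤ :=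
    fun i l k q p => (if p = (i, q) then 1 else 0) + (if p = (l, k) then 1 else 0)
      - (if p = (i, k) then 1 else 0) - (if p = (l, q) then 1 else 0) with hccdef
  set T : Fin n → Fin n → Fin m → Fin m → Ω → ℂ :=
    fun i l k q ω => Complex.exp (Complex.I * ∑ p, (cc i l k q p : ℂ) * (θ p ω : ℂ)) with hTdef
  set A : Fin n → Fin n → Fin m → Fin m → ℝ :=
    fun i l k q => a i k * a i q * a l q * a l k with hAdef
  -- the expectation of each exponential
  have hexp : ∀ i l k q, ∫ ω, T i l k q ω ∂μ
      = if (∀ p, cc i l k q p = 0) then 1 else 0 := by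
    intro i l k q
    exact exp_sum_integral μ θ hmeas hindep (fun p => by rw [nuU]; exact hunif p) _
  -- condition characterization
  have hcond : ∀ i l k q, (∀ p, cc i l k q p = 0) ↔ (i = l ∨ k = q) := by
    intro i l k q
    constructor
    · intro h
      by_contra hc
      push_neg at hc
      obtain ⟨hil, hkq⟩ := hc
      have := h (l, k)
      simp [hccdef, Prod.ext_iff, Ne.symm hil, Ne.symm hkq, hkq] at this
    · rintro (rfl | rfl) p <;> simp only [hccdef] <;> ring
  -- measurability and integrability of T
  have hT_meas : ∀ i l k q, Measurable (T i l k q) := by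
    intro i l k q
    apply Complex.measurable_exp.comp
    exact measurable_const.mul (Finset.measurable_sum _ fun p _ =>
      measurable_const.mul (Complex.measurable_ofReal.comp (hmeas p)))
  have hT_norm : ∀ i l k q ω, ‖T i l k q ω‖ = 1 := by
    intro i l k q ω
    have h1 : (∑ p, (cc i l k q p : ℂ) * (θ p ω : ℂ))
        = ((∑ p, (cc i l k q p : ℝ) * θ p ω : ℝ) : ℂ) := by push_cast; ring
    simp only [hTdef, h1, Complex.norm_exp]
    simp [Complex.mul_re]
  have hT_int : ∀ i l k q, Integrable (T i l k q) μ := by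
    intro i l k q
    refine Integrable.mono' (integrable_const 1) (hT_meas i l k q).aestronglyMeasurable
      (ae_of_all _ fun ω => ?_)
    rw [hT_norm]
  -- pointwise term identity
  have hterm : ∀ (i l : Fin n) (k q : Fin m) (ω : Ω),
      (starRingEnd ℂ) (H ω i k) * H ω i q * ((starRingEnd ℂ) (H ω l q) * H ω l k)
        = ((A i l k q : ℝ) : ℂ) * T i l k q ω := by
    intro i l k q ω
    have hsum : (∑ p, (cc i l k q p : ℂ) * (θ p ω : ℂ))
        = (θ (i, q) ω : ℂ) + (θ (l, k) ω : ℂ) - (θ (i, k) ω : ℂ) - (θ (l, q) ω : ℂ) := by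
      simp only [hccdef]
      push_cast
      simp only [add_mul, sub_mul, ite_mul, one_mul, zero_mul]
      simp [Finset.sum_add_distrib, Finset.sum_sub_distrib, Finset.sum_ite_eq']
    have hconj : ∀ (i' : Fin n) (k' : Fin m),
        (starRingEnd ℂ) (H ω i' k') = (a i' k' : ℂ) * Complex.exp (-(Complex.I * (θ (i', k') ω : ℂ))) := by
      intro i' k'
      simp only [hH, _root_.map_mul, ← Complex.exp_conj, Complex.conj_I, Complex.conj_ofReal, neg_mul]
    rw [hconj, hconj, hH, hH, hTdef]
    simp only [hsum, hAdef]
    rw [show Complex.I * ((θ (i, q) ω : ℂ) + (θ (l, k) ω : ℂ) - (θ (i, k) ω : ℂ) - (θ (l, q) ω : ℂ))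
        = Complex.I * (θ (i, q) ω : ℂ) + Complex.I * (θ (l, k) ω : ℂ)
          + -(Complex.I * (θ (i, k) ω : ℂ)) + -(Complex.I * (θ (l, q) ω : ℂ)) by ring,
      Complex.exp_add, Complex.exp_add, Complex.exp_add]
    push_cast
    ring
  -- expand the trace
  have htrace : ∀ ω, Matrix.trace (((H ω)ᴴ * H ω) ^ 2)
      = ∑ k : Fin m, ∑ q : Fin m, ∑ i : Fin n, ∑ l : Fin n,
          (starRingEnd ℂ) (H ω i k) * H ω i q * ((starRingEnd ℂ) (H ω l q) * H ω l k) := by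
    intro ω
    rw [pow_two, Matrix.trace]
    simp only [Matrix.diag_apply, Matrix.mul_apply, Matrix.conjTranspose_apply]
    simp_rw [Finset.sum_mul_sum]
    rfl
  -- main computation
  have step1 : (∫ ω, Matrix.trace (((H ω)ᴴ * H ω) ^ 2) ∂μ)
      = ∑ x : Fin m × Fin m × Fin n × Fin n,
          ∫ ω, ((A x.2.2.1 x.2.2.2 x.1 x.2.1 : ℝ) : ℂ) * T x.2.2.1 x.2.2.2 x.1 x.2.1 ω ∂μ := by
    rw [← integral_finset_sum _ (fun x _ =>
      ((hT_int x.2.2.1 x.2.2.2 x.1 x.2.1).const_mul _))]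
    congr 1
    funext ω
    rw [htrace ω]
    simp only [Fintype.sum_prod_type]
    exact Finset.sum_congr rfl fun k _ => Finset.sum_congr rfl fun q _ =>
      Finset.sum_congr rfl fun i _ => Finset.sum_congr rfl fun l _ => hterm i l k q ω
  rw [step1]
  have step2 : ∀ x : Fin m × Fin m × Fin n × Fin n,
      (∫ ω, ((A x.2.2.1 x.2.2.2 x.1 x.2.1 : ℝ) : ℂ) * T x.2.2.1 x.2.2.2 x.1 x.2.1 ω ∂μ)
        = if (x.2.2.1 = x.2.2.2 ∨ x.1 = x.2.1)
            then ((A x.2.2.1 x.2.2.2 x.1 x.2.1 : ℝ) : ℂ) else 0 := by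
    intro x
    rw [integral_const_mul, hexp, if_congr (hcond x.2.2.1 x.2.2.2 x.1 x.2.1) rfl rfl,
      mul_ite, mul_one, mul_zero]
  simp_rw [step2]
  -- reduce to a real identity
  have hreal :
      (∑ x : Fin m × Fin m × Fin n × Fin n,
        (if (x.2.2.1 = x.2.2.2 ∨ x.1 = x.2.1) then A x.2.2.1 x.2.2.2 x.1 x.2.1 else 0))
      = (∑ i, (∑ k, a i k ^ 2) ^ 2 + ∑ k, (∑ i, a i k ^ 2) ^ 2 - ∑ i, ∑ k, a i k ^ 4) := by
    have hsplit : ∀ (x : ℝ) (P Q : Prop) [Decidable P] [Decidable Q],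
        (if P ∨ Q then x else 0)
          = (if P then x else 0) + (if Q then x else 0) - (if P ∧ Q then x else 0) := by
      intro x P Q _ _
      by_cases hP : P <;> by_cases hQ : Q <;> simp [hP, hQ]
    simp only [Fintype.sum_prod_type]
    simp_rw [hsplit, Finset.sum_sub_distrib, Finset.sum_add_distrib]
    have hsum_ite : ∀ {α : Type} [Fintype α] (P : Prop) [Decidable P] (f : α → ℝ),
        (∑ x : α, if P then f x else 0) = if P then ∑ x : α, f x else 0 := by
      intro α _ P _ f
      split <;> simp
    congr 1
    · congr 1
      · -- i = l diagonal
        simp only [Finset.sum_ite_eq, Finset.mem_univ, if_true, hAdef]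
        have h1 : ∀ i : Fin n, (∑ k, a i k ^ 2) ^ 2 = ∑ k, ∑ q, a i k ^ 2 * a i q ^ 2 :=
          fun i => by rw [sq, Finset.sum_mul_sum]
        simp_rw [h1]
        conv_rhs => rw [Finset.sum_comm]
        refine Finset.sum_congr rfl fun k _ => ?_
        conv_rhs => rw [Finset.sum_comm]
        exact Finset.sum_congr rfl fun q _ => Finset.sum_congr rfl fun i _ => by ring
      · -- k = q diagonal
        simp only [hAdef, hsum_ite, Finset.sum_ite_eq, Finset.mem_univ, if_true]
        have h1 : ∀ k : Fin m, (∑ i, a i k ^ 2) ^ 2 = ∑ i, ∑ l, a i k ^ 2 * a l k ^ 2 :=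
          fun k => by rw [sq, Finset.sum_mul_sum]
        simp_rw [h1]
        exact Finset.sum_congr rfl fun k _ => Finset.sum_congr rfl fun i _ =>
          Finset.sum_congr rfl fun l _ => by ring
    · -- double diagonal
      simp only [hAdef, ite_and, Finset.sum_ite_eq, Finset.mem_univ, if_true, hsum_ite]
      conv_rhs => rw [Finset.sum_comm]
      exact Finset.sum_congr rfl fun k _ => Finset.sum_congr rfl fun i _ => by ring
  calc (∑ x : Fin m × Fin m × Fin n × Fin n,
        if (x.2.2.1 = x.2.2.2 ∨ x.1 = x.2.1) then ((A x.2.2.1 x.2.2.2 x.1 x.2.1 : ℝ) : ℂ) else 0)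
      = ((∑ x : Fin m × Fin m × Fin n × Fin n,
          (if (x.2.2.1 = x.2.2.2 ∨ x.1 = x.2.1) then A x.2.2.1 x.2.2.2 x.1 x.2.1 else 0) : ℝ) : ℂ) := by
        push_cast [apply_ite (Complex.ofReal)]
        rfl
    _ = _ := by rw [hreal]
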